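/- Let 𝕜 be a complete nontrivially normed field, let V and W be Banach spaces over 𝕜, let g : V → W be a continuous surjective 𝕜-linear map, and let U = ker g with the norm induced from V. Then the induced sequence 0 → c₀(ℕ, U) → c₀(ℕ, V) → c₀(ℕ, W) → 0 of spaces of null sequences is exact: the first map is injective, its image equals the kernel of the second map, and the second map is surjective. In particular, every sequence in W converging to 0 lifts under g to a sequence in V converging to 0. -/

import Mathlib

open Filter

/-- Let `𝕜` be a complete nontrivially normed field, `V`, `W` Banach
spaces over `𝕜`, `g : V → W` a continuous surjective linear map, and `U = ker g` with the
induced norm.  Then the induced sequence `0 → c₀(ℕ, U) → c₀(ℕ, V) → c₀(ℕ, W) → 0` of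
spaces of null sequences is exact: the first map is injective, its image is the kernel of
the second, and the second is surjective (every null sequence in `W` lifts to a null
sequence in `V`). -/
theorem stmt_6 (𝕜 : Type*) [NontriviallyNormedField 𝕜] [CompleteSpace 𝕜]
    (V W : Type*) [NormedAddCommGroup V] [NormedSpace 𝕜 V] [CompleteSpace V]
    [NormedAddCommGroup W] [NormedSpace 𝕜 W] [CompleteSpace W]
    (g : V →L[𝕜] W) (hg : Function.Surjective g) :
    (Function.Injective
      (fun f : {f : ℕ → LinearMap.ker (g : V →ₗ[𝕜] W) // Tendsto f atTop (nhds 0)} =>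
        (fun n => ((f.1 n : V)) : ℕ → V))) ∧
    (∀ v : ℕ → V, Tendsto v atTop (nhds 0) →
      ((∀ n, g (v n) = 0) ↔
        ∃ u : ℕ → LinearMap.ker (g : V →ₗ[𝕜] W), Tendsto u atTop (nhds 0) ∧ ∀ n, ((u n : V)) = v n)) ∧
    (∀ w : ℕ → W, Tendsto w atTop (nhds 0) →
      ∃ v : ℕ → V, Tendsto v atTop (nhds 0) ∧ ∀ n, g (v n) = w n) := by
  refine ⟨?_, ?_, ?_⟩
  · intro f f' h
    ext n : 2
    exact Subtype.ext (congrFun h n)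
  · intro v hv
    constructor
    · intro h
      refine ⟨fun n => ⟨v n, h n⟩, ?_, fun n => rfl⟩
      rw [tendsto_zero_iff_norm_tendsto_zero]
      simpa using tendsto_zero_iff_norm_tendsto_zero.mp hv
    · rintro ⟨u, _, hu⟩ n
      rw [← hu n]
      exact (u n).2
  · intro w hw
    obtain ⟨C, hC, hlift⟩ := g.exists_preimage_norm_le hg
    choose v hv hvn using hlift
    refine ⟨fun n => v (w n), ?_, fun n => hv (w n)⟩
    rw [tendsto_zero_iff_norm_tendsto_zero]
    have hw' := tendsto_zero_iff_norm_tendsto_zero.mp hw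
    refine squeeze_zero (fun n => norm_nonneg _) (fun n => hvn (w n)) ?_
    simpa using hw'.const_mul C
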